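/- Let f₁ : ℝ^d → ℝ be convex and differentiable, f₂ : ℝ^d → ℝ convex, f = f₁ + f₂, and L > 0. Fix y ∈ ℝ^d and let x* = argmin_x ⟨∇f₁(y), x − y⟩ + (L/2)‖x − y‖² + f₂(x). If f₁(x*) ≤ f₁(y) + ⟨∇f₁(y), x* − y⟩ + (L/2)‖x* − y‖², then for every x ∈ ℝ^d, f(x) − f(x*) ≥ (L/2)‖x* − y‖² + L⟨y − x, x* − y⟩. -/

import Mathlib

open scoped RealInnerProductSpace

theorem grad_ineq (d : ℕ) (f₁ : EuclideanSpace ℝ (Fin d) → ℝ)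
    (hf₁ : ConvexOn ℝ Set.univ f₁)
    (y g x : EuclideanSpace ℝ (Fin d)) (hg : HasGradientAt f₁ g y) :
    f₁ y + ⟪g, x - y⟫ ≤ f₁ x := by
  have hφc : ConvexOn ℝ Set.univ (fun t : ℝ => f₁ (AffineMap.lineMap y x t)) := by
    have := hf₁.comp_affineMap (AffineMap.lineMap y x)
    simpa [Function.comp_def] using this
  have hd : HasDerivAt (fun t : ℝ => f₁ (AffineMap.lineMap y x t)) ⟪g, x - y⟫ 0 := by
    have hF := hasGradientAt_iff_hasFDerivAt.mp hg
    have hline : HasDerivAt (fun t : ℝ => (AffineMap.lineMap y x t : EuclideanSpace ℝ (Fin d)))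
        (x - y) 0 := by
      have h1 : HasDerivAt (fun t : ℝ => t • (x - y) + y) ((1:ℝ) • (x - y)) 0 :=
        ((hasDerivAt_id (0:ℝ)).smul_const (x - y)).add_const y
      have he : (fun t : ℝ => (AffineMap.lineMap y x t : EuclideanSpace ℝ (Fin d)))
          = fun t : ℝ => t • (x - y) + y := by
        funext t; simp [AffineMap.lineMap_apply_module]; module
      rw [he]; simpa using h1
    have hF' : HasFDerivAt f₁ ((InnerProductSpace.toDual ℝ _) g)
        ((AffineMap.lineMap y x : ℝ →ᵃ[ℝ] _) 0) := by simpa using hF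
    have := hF'.comp_hasDerivAt (0:ℝ) hline
    simpa [Function.comp_def] using this
  have hs := hφc.le_slope_of_hasDerivAt (Set.mem_univ 0) (Set.mem_univ 1) one_pos hd
  rw [slope_def_field] at hs
  simp only [AffineMap.lineMap_apply_zero, AffineMap.lineMap_apply_one] at hs
  have : ⟪g, x - y⟫ ≤ f₁ x - f₁ y := by simpa using hs
  linarith

/-- the sufficient-decrease lemma (Beck–Teboulle Lemma 2.3) for a
proximal gradient step with stepsize `1/L`. -/
theorem sufficient_decrease_lemma (d : ℕ)
    (f₁ f₂ : EuclideanSpace ℝ (Fin d) → ℝ)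
    (hf₁ : ConvexOn ℝ Set.univ f₁) (hf₂ : ConvexOn ℝ Set.univ f₂)
    (hdiff : Differentiable ℝ f₁)
    (L : ℝ) (hL : 0 < L) (y xstar : EuclideanSpace ℝ (Fin d))
    (g : EuclideanSpace ℝ (Fin d)) (hg : HasGradientAt f₁ g y)
    (hxstar : ∀ x : EuclideanSpace ℝ (Fin d),
      ⟪g, xstar - y⟫ + (L / 2) * ‖xstar - y‖ ^ 2 + f₂ xstar ≤
        ⟪g, x - y⟫ + (L / 2) * ‖x - y‖ ^ 2 + f₂ x)
    (hdesc : f₁ xstar ≤ f₁ y + ⟪g, xstar - y⟫ + (L / 2) * ‖xstar - y‖ ^ 2) :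
    ∀ x : EuclideanSpace ℝ (Fin d),
      (f₁ x + f₂ x) - (f₁ xstar + f₂ xstar) ≥
        (L / 2) * ‖xstar - y‖ ^ 2 + L * ⟪y - x, xstar - y⟫ := by
  intro x
  set v : EuclideanSpace ℝ (Fin d) := xstar - y with hv
  set w : EuclideanSpace ℝ (Fin d) := x - xstar with hw
  -- Step 1: first-order optimality of xstar
  have key : ∀ t : ℝ, 0 < t → t ≤ 1 →
      0 ≤ ⟪g, w⟫ + L * ⟪v, w⟫ + f₂ x - f₂ xstar + (L / 2) * t * ‖w‖ ^ 2 := by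
    intro t ht ht1
    have h1 := hxstar (xstar + t • w)
    have hsub : (xstar + t • w) - y = v + t • w := by rw [hv, hw]; module
    have hnorm : ‖v + t • w‖ ^ 2 = ‖v‖ ^ 2 + 2 * (t * ⟪v, w⟫) + t ^ 2 * ‖w‖ ^ 2 := by
      rw [norm_add_sq_real, real_inner_smul_right, norm_smul]
      rw [Real.norm_eq_abs, mul_pow, sq_abs]
    have hinner : ⟪g, v + t • w⟫ = ⟪g, v⟫ + t * ⟪g, w⟫ := by
      rw [inner_add_right, real_inner_smul_right]
    have hcvx : f₂ (xstar + t • w) ≤ (1 - t) * f₂ xstar + t * f₂ x := by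
      have hc := hf₂.2 (Set.mem_univ xstar) (Set.mem_univ x)
        (by linarith : (0:ℝ) ≤ 1 - t) ht.le (by ring)
      have : (1 - t) • xstar + t • x = xstar + t • w := by rw [hw]; module
      rwa [this] at hc
    rw [hsub, hnorm, hinner] at h1
    have h2 : 0 ≤ t * (⟪g, w⟫ + L * ⟪v, w⟫ + f₂ x - f₂ xstar + (L / 2) * t * ‖w‖ ^ 2) := by
      nlinarith [h1, hcvx]
    exact nonneg_of_mul_nonneg_right h2 ht
  have hB : (0:ℝ) ≤ ‖w‖ ^ 2 := sq_nonneg _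
  set A : ℝ := ⟪g, w⟫ + L * ⟪v, w⟫ + f₂ x - f₂ xstar with hA
  have hopt : 0 ≤ A := by
    by_contra hc
    push_neg at hc
    set B := ‖w‖ ^ 2
    set t0 : ℝ := min 1 ((-A) / (L * B + 1)) with ht0
    have hden : 0 < L * B + 1 := by nlinarith
    have ht0pos : 0 < t0 := lt_min one_pos (div_pos (by linarith) hden)
    have hk := key t0 ht0pos (min_le_left _ _)
    have ht0le : t0 ≤ (-A) / (L * B + 1) := min_le_right _ _
    have hmul : t0 * (L * B + 1) ≤ -A := by
      rw [div_eq_mul_inv] at ht0le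
      calc t0 * (L * B + 1) ≤ (-A) * (L * B + 1)⁻¹ * (L * B + 1) :=
            mul_le_mul_of_nonneg_right ht0le hden.le
        _ = -A := by field_simp
    nlinarith [hk, hmul, ht0pos, hc, mul_nonneg (mul_nonneg hL.le ht0pos.le) hB]
  -- Step 2: gradient inequality for f₁
  have hgrad : f₁ y + ⟪g, x - y⟫ ≤ f₁ x := grad_ineq d f₁ hf₁ y g x hg
  -- Step 3: combine
  have hi1 : ⟪g, x - y⟫ = ⟪g, v⟫ + ⟪g, w⟫ := by
    rw [← inner_add_right]; congr 1; rw [hv, hw]; module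
  have hi2 : ⟪y - x, v⟫ = -‖v‖ ^ 2 - ⟪v, w⟫ := by
    have h : y - x = -(v + w) := by rw [hv, hw]; module
    rw [h, inner_neg_left, inner_add_left, real_inner_self_eq_norm_sq, real_inner_comm w v]
    ring
  rw [hi2] at *
  simp only [hA] at hopt
  linarith [hopt, hgrad, hdesc, hi1]
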